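/- arXiv:2504.01322 — 6 statements merged into one kernel-verified Lean document; each statement's English description precedes it below -/
import Mathlib

section
/- Let b0, b1, b2 be real numbers with b1 = b0 + 1, b1 ≠ 0 and b2 > 0. Define δ = b1^2*(b1^2 - 4*b0) + 4*b2^2 and Ω₋ = (-b1^2 - sqrt(δ))/(2*b2). Then δ ≥ 0 and |Ω₋| > 1. -/
theorem stmt_2 (b0 b1 b2 : ℝ) (h : b1 = b0 + 1) (hb1 : b1 ≠ 0) (hb2 : 0 < b2)
    (δ : ℝ) (hδ : δ = b1 ^ 2 * (b1 ^ 2 - 4 * b0) + 4 * b2 ^ 2)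
    (Ωm : ℝ) (hΩ : Ωm = (-b1 ^ 2 - Real.sqrt δ) / (2 * b2)) :
    δ ≥ 0 ∧ |Ωm| > 1 := by
  have hb1sq : 0 < b1 ^ 2 := by positivity
  have hδ0 : δ ≥ 0 := by nlinarith [sq_nonneg (b1 - 2), sq_nonneg b2, sq_nonneg (b1 * (b1 - 2))]
  refine ⟨hδ0, ?_⟩
  have hsq : (2 * b2) ^ 2 ≤ δ := by nlinarith [sq_nonneg (b1 * (b1 - 2))]
  have hsqrt : 2 * b2 ≤ Real.sqrt δ := by
    have := Real.sqrt_le_sqrt hsq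
    rwa [Real.sqrt_sq (by positivity)] at this
  have hlt : Ωm < -1 := by
    rw [hΩ, div_lt_iff₀ (by positivity)]
    nlinarith
  have := neg_le_abs Ωm
  linarith
end

section
/- Let b0, b1, b2 be real numbers with b1 = b0 + 1, b1 ≠ 0, b2 > 0, and b0^2 - b2^2 < 0. Define δ = b1^2*(b1^2 - 4*b0) + 4*b2^2 and Ω₊ = (-b1^2 + sqrt(δ))/(2*b2). Then |Ω₊| < 1. -/
theorem stmt_3 (b0 b1 b2 : ℝ) (h : b1 = b0 + 1) (hb1 : b1 ≠ 0) (hb2 : 0 < b2)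
    (hlt : b0 ^ 2 - b2 ^ 2 < 0)
    (δ : ℝ) (hδ : δ = b1 ^ 2 * (b1 ^ 2 - 4 * b0) + 4 * b2 ^ 2)
    (Ωp : ℝ) (hΩ : Ωp = (-b1 ^ 2 + Real.sqrt δ) / (2 * b2)) :
    |Ωp| < 1 := by
  have hb1sq : 0 < b1 ^ 2 := by positivity
  have hδpos : 0 < δ := by nlinarith [sq_nonneg (b1 ^ 2 - 2 * b0)]
  set s := Real.sqrt δ with hs
  have hs0 : 0 < s := Real.sqrt_pos.mpr hδpos
  have hssq : s ^ 2 = δ := Real.sq_sqrt hδpos.le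
  have hb0b2 : -b2 < b0 ∧ b0 < b2 := abs_lt.mp (by nlinarith [abs_nonneg b0, sq_abs b0, sq_nonneg (|b0| - b2)])
  have hup : s < b1 ^ 2 + 2 * b2 := by nlinarith [hb0b2.1, hb0b2.2]
  have hlo : b1 ^ 2 - 2 * b2 < s := by nlinarith [hb0b2.2]
  rw [abs_lt, hΩ]
  constructor
  · rw [lt_div_iff₀ (by positivity)]
    linarith
  · rw [div_lt_one (by positivity)]
    linarith
end

section
/- Let b0, b1, b2 be real numbers with b1 = b0 + 1, b1 ≠ 0, b2 > 0, and b0^2 - b2^2 > 0. Define δ = b1^2*(b1^2 - 4*b0) + 4*b2^2 and Ω₊ = (-b1^2 + sqrt(δ))/(2*b2). Then |Ω₊| > 1. -/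
theorem stmt_4 (b0 b1 b2 : ℝ) (h : b1 = b0 + 1) (hb1 : b1 ≠ 0) (hb2 : 0 < b2)
    (hgt : b0 ^ 2 - b2 ^ 2 > 0)
    (δ : ℝ) (hδ : δ = b1 ^ 2 * (b1 ^ 2 - 4 * b0) + 4 * b2 ^ 2)
    (Ωp : ℝ) (hΩ : Ωp = (-b1 ^ 2 + Real.sqrt δ) / (2 * b2)) :
    |Ωp| > 1 := by
  have hb1sq : 0 < b1 ^ 2 := by positivity
  have hcase : b2 < b0 ∨ b0 < -b2 := by
    rcases lt_or_ge 0 b0 with h0 | h0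
    · left; nlinarith [sq_nonneg (b0 - b2), sq_nonneg (b0 + b2)]
    · right; nlinarith [sq_nonneg (b0 - b2), sq_nonneg (b0 + b2)]
  rcases hcase with hc | hc
  · -- b0 > b2 > 0 : Ωp < -1
    have h2b2 : b1 ^ 2 - 2 * b2 > 0 := by nlinarith
    have hsqrt : Real.sqrt δ < b1 ^ 2 - 2 * b2 := by
      rw [Real.sqrt_lt' h2b2]
      nlinarith
    have hlt : Ωp < -1 := by
      rw [hΩ, div_lt_iff₀ (by linarith : 0 < 2 * b2)]
      linarith
    calc (1:ℝ) < -Ωp := by linarith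
    _ ≤ |Ωp| := neg_le_abs Ωp
  · -- b0 < -b2 : Ωp > 1
    have hsqrt : b1 ^ 2 + 2 * b2 < Real.sqrt δ := by
      rw [Real.lt_sqrt (by positivity)]
      nlinarith
    have hgt1 : 1 < Ωp := by
      rw [hΩ, lt_div_iff₀ (by linarith : 0 < 2 * b2)]
      linarith
    calc (1:ℝ) < Ωp := hgt1
    _ ≤ |Ωp| := le_abs_self Ωp
end

section
/- Let τ, γ0, ω0 > 0 and b0, b1, b2 real with b1 = b0 + 1, and suppose M(λ,γ0) = λ^2 + γ0 b1 λ + γ0^2 b0 + γ0^2 b2 e^{-2τλ} has iω0 as a root. Then iω0 is a simple root of M(·, γ0), i.e., the derivative dM/dλ(iω0, γ0) = 2iω0 + γ0 b1 - 2τγ0^2 b2 e^{-2τ i ω0} is nonzero. -/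
open Complex

theorem stmt_8 (τ γ0 ω0 b0 b1 b2 : ℝ) (hτ : 0 < τ) (hγ0 : 0 < γ0) (hω0 : 0 < ω0)
    (h : b1 = b0 + 1)
    (hroot : (I * ω0) ^ 2 + (γ0 : ℂ) * b1 * (I * ω0) + (γ0 : ℂ) ^ 2 * b0 +
      (γ0 : ℂ) ^ 2 * b2 * Complex.exp (-2 * τ * (I * ω0)) = 0) :
    2 * (I * ω0) + (γ0 : ℂ) * b1 -
      2 * τ * (γ0 : ℂ) ^ 2 * b2 * Complex.exp (-2 * τ * (I * ω0)) ≠ 0 := by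
  intro hder
  have key : 2 * (I * (ω0:ℂ)) + (γ0 : ℂ) * b1 +
      2 * (τ:ℂ) * ((I * ω0) ^ 2 + (γ0 : ℂ) * b1 * (I * ω0) + (γ0 : ℂ) ^ 2 * b0) = 0 := by
    linear_combination hder + 2 * (τ:ℂ) * hroot
  rw [Complex.ext_iff] at key
  simp [Complex.add_re, Complex.add_im, Complex.mul_re, Complex.mul_im, pow_two] at key
  obtain ⟨hre, him⟩ := key
  have h1 : 1 + τ * γ0 * b1 = 0 := by
    have := him
    nlinarith [hω0]
  have hb1 : b1 < 0 := by nlinarith [mul_pos hτ hγ0]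
  have hb0 : b0 < 0 := by linarith
  nlinarith [mul_pos hγ0 hγ0, mul_pos hω0 hω0, mul_neg_of_pos_of_neg hγ0 hb1, mul_pos (mul_pos hγ0 hγ0) hτ]
end

section
/- Let γ0, ω0 > 0 and b0, b1, b2 real with b1 = b0 + 1. Suppose both iω0 and n·iω0, for some integer n with |n| ≠ 1, satisfy |λ^2 + γ0 b1 λ + γ0^2 b0|^2 = γ0^4 b2^2 (equivalently, γ0^4 b2^2 = (ω^2 - γ0^2 b0)^2 + γ0^2 b1^2 ω^2 for ω = ω0 and ω = nω0). Then a contradiction follows; i.e., no integer multiple n iω0 with |n| ≠ 1 can also satisfy this modulus condition. -/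
theorem stmt_9 (γ0 ω0 b0 b1 b2 : ℝ) (hγ0 : 0 < γ0) (hω0 : 0 < ω0)
    (h : b1 = b0 + 1) (n : ℤ) (hn : |n| ≠ 1)
    (h1 : γ0 ^ 4 * b2 ^ 2 = (ω0 ^ 2 - γ0 ^ 2 * b0) ^ 2 + γ0 ^ 2 * b1 ^ 2 * ω0 ^ 2)
    (h2 : γ0 ^ 4 * b2 ^ 2 =
      ((n : ℝ) ^ 2 * ω0 ^ 2 - γ0 ^ 2 * b0) ^ 2 + γ0 ^ 2 * b1 ^ 2 * (n : ℝ) ^ 2 * ω0 ^ 2) :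
    False := by
  subst h
  set m : ℝ := (n : ℝ) ^ 2 with hm
  have hkey : (m - 1) * ω0 ^ 2 * ((m + 1) * ω0 ^ 2 + γ0 ^ 2 * (b0 ^ 2 + 1)) = 0 := by
    linear_combination h1 - h2
  have hm0 : 0 ≤ m := sq_nonneg _
  have hbr : 0 < (m + 1) * ω0 ^ 2 + γ0 ^ 2 * (b0 ^ 2 + 1) := by positivity
  have hω2 : 0 < ω0 ^ 2 := by positivity
  have hm1 : m = 1 := by
    rcases mul_eq_zero.mp hkey with h' | h'
    · rcases mul_eq_zero.mp h' with h'' | h''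
      · linarith
      · linarith
    · linarith
  have : (n : ℝ) ^ 2 = 1 := hm1
  have hn2 : n ^ 2 = 1 := by exact_mod_cast this
  have : |n| = 1 := by
    have : |n| ^ 2 = 1 := by rw [sq_abs]; exact hn2
    nlinarith [abs_nonneg n]
  exact hn this
end

section
/- Let s0 > 1, γ0, ω0 > 0, b0, b1 real with b1 = b0 + 1, and let C be the 2×2 real matrix with entries C₁₁ = (b1+2)ω0², C₁₂ = -[(b1+2)γ0ω0 + (s0+1)((b0+b1)γ0²ω0 - ω0³)], C₂₁ = (2ω0²/γ0 - b1γ0)ω0, C₂₂ = b1γ0² - 2ω0² + (s0+1)((-b1-1)γ0ω0² + b0γ0³). Then det C = -ω0²(s0+1)[(b0²+3)γ0ω0² + (b0²+1)γ0³ + 2ω0⁴/γ0] < 0; in particular C is invertible. -/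
theorem stmt_16 (s0 γ0 ω0 b0 b1 : ℝ) (hs0 : 1 < s0) (hγ0 : 0 < γ0) (hω0 : 0 < ω0)
    (h : b1 = b0 + 1)
    (C : Matrix (Fin 2) (Fin 2) ℝ)
    (hC : C = !![(b1 + 2) * ω0 ^ 2,
                 -((b1 + 2) * γ0 * ω0 + (s0 + 1) * ((b0 + b1) * γ0 ^ 2 * ω0 - ω0 ^ 3));
                 (2 * ω0 ^ 2 / γ0 - b1 * γ0) * ω0,
                 b1 * γ0 ^ 2 - 2 * ω0 ^ 2 + (s0 + 1) * ((-b1 - 1) * γ0 * ω0 ^ 2 + b0 * γ0 ^ 3)]) :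
    C.det = -(ω0 ^ 2) * (s0 + 1) *
        ((b0 ^ 2 + 3) * γ0 * ω0 ^ 2 + (b0 ^ 2 + 1) * γ0 ^ 3 + 2 * ω0 ^ 4 / γ0) ∧
      C.det < 0 ∧ IsUnit C.det := by
  have hγ : γ0 ≠ 0 := ne_of_gt hγ0
  have hdet : C.det = -(ω0 ^ 2) * (s0 + 1) *
      ((b0 ^ 2 + 3) * γ0 * ω0 ^ 2 + (b0 ^ 2 + 1) * γ0 ^ 3 + 2 * ω0 ^ 4 / γ0) := by
    subst h hC
    rw [Matrix.det_fin_two_of]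
    field_simp
    ring
  have hpos : 0 < (b0 ^ 2 + 3) * γ0 * ω0 ^ 2 + (b0 ^ 2 + 1) * γ0 ^ 3 + 2 * ω0 ^ 4 / γ0 := by
    have h1 : 0 < (b0 ^ 2 + 3) * γ0 * ω0 ^ 2 := by positivity
    have h2 : 0 < (b0 ^ 2 + 1) * γ0 ^ 3 := by positivity
    have h3 : 0 < 2 * ω0 ^ 4 / γ0 := by positivity
    linarith
  have hlt : C.det < 0 := by
    rw [hdet]
    have : 0 < s0 + 1 := by linarith
    nlinarith [sq_nonneg ω0, mul_pos (mul_pos (pow_pos hω0 2) this) hpos]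
  exact ⟨hdet, hlt, (isUnit_iff_ne_zero).2 (ne_of_lt hlt)⟩
end
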